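/- Suppose in addition that σ is not identically zero. Then for every k > max{ 2C₁/‖σ‖_{L¹(B₁)}, 1 }, one has the L¹ stability estimate ‖σ‖_{L¹(B₁)} ≤ (2n²/|β_d|²) k^{4n+m−d−1} M_PL(k). -/

import Mathlib

open MeasureTheory

noncomputable section

/-- `ℝ^d` with the Euclidean structure. -/
abbrev Ed (d : ℕ) := EuclideanSpace ℝ (Fin d)

/-- `β_d = e^{iπ/4}/√(8π)` for `d = 2` and `β_d = 1/(4π)` otherwise (`d = 3`). -/
def betaD (d : ℕ) : ℂ :=
  if d = 2 then Complex.exp (Complex.I * Real.pi / 4) / (Real.sqrt (8 * Real.pi) : ℝ)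
  else 1 / (4 * (Real.pi : ℂ))

/-- Fourier transform `σ̂(γ) = ∫_{ℝ^d} σ(z) e^{-iγ·z} dz` of a real-valued function. -/
def sigmaHat (d : ℕ) (σ : Ed d → ℝ) (γ : Ed d) : ℂ :=
  ∫ z, (σ z : ℂ) * Complex.exp (-Complex.I * ((inner ℝ γ z : ℝ) : ℂ))

/-- Correlation of far-field patterns of the stochastic polyharmonic wave equation:
`F_PL(x̂,ŷ,k) = (β_d²/n²) k^{d+1−4n} (k^{−m} σ̂(k(x̂+ŷ)) + ∫_{B₁} r(z,−kŷ) e^{−ik(x̂+ŷ)·z} dz)`. -/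
def FPL (d n : ℕ) (m : ℝ) (σ : Ed d → ℝ) (r : Ed d → Ed d → ℂ) (k : ℝ)
    (x y : Ed d) : ℂ :=
  (betaD d) ^ 2 / (n : ℂ) ^ 2 * ((k ^ ((d : ℝ) + 1 - 4 * (n : ℝ)) : ℝ) : ℂ) *
    (((k ^ (-m) : ℝ) : ℂ) * sigmaHat d σ (k • (x + y)) +
      ∫ z in Metric.ball (0 : Ed d) 1,
        r z (-(k • y)) * Complex.exp (-Complex.I * ((inner ℝ (k • (x + y)) z : ℝ) : ℂ)))

/-- `M_PL(k) = sup_{x̂,ŷ ∈ S^{d−1}} |F_PL(x̂,ŷ,k)|`. -/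
def MPL (d n : ℕ) (m : ℝ) (σ : Ed d → ℝ) (r : Ed d → Ed d → ℂ) (k : ℝ) : ℝ :=
  sSup {v : ℝ | ∃ x y : Ed d, ‖x‖ = 1 ∧ ‖y‖ = 1 ∧ v = ‖FPL d n m σ r k x y‖}

end

section myaux

lemma my_betaD_ne (d : ℕ) : betaD d ≠ 0 := by
  unfold betaD
  split
  · apply div_ne_zero (Complex.exp_ne_zero _)
    simp only [ne_eq, Complex.ofReal_eq_zero]
    positivity
  · apply div_ne_zero one_ne_zero
    exact mul_ne_zero (by norm_num) (Complex.ofReal_ne_zero.2 Real.pi_ne_zero)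

lemma my_exp_abs (t : ℝ) : ‖Complex.exp (-Complex.I * (t:ℂ))‖ = 1 := by
  rw [Complex.norm_exp]; simp

end myaux

/-- `L¹` stability, polyharmonic case. If moreover `σ` is not identically
zero, then for every `k > max{2C₁/‖σ‖_{L¹(B₁)}, 1}`,
`‖σ‖_{L¹(B₁)} ≤ (2n²/|β_d|²) k^{4n+m−d−1} M_PL(k)`. -/
theorem statement5 (d n : ℕ) (hd : d = 2 ∨ d = 3) (hn : 1 ≤ n) (m C₁ : ℝ) (hC₁ : 0 < C₁)
    (σ : Ed d → ℝ) (hσ_int : Integrable σ) (hσ_nn : ∀ z, 0 ≤ σ z)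
    (hσ_supp : ∀ z ∉ Metric.ball (0 : Ed d) 1, σ z = 0) (hσ_ne : σ ≠ 0)
    (r : Ed d → Ed d → ℂ) (hr_int : ∀ ξ, Integrable (fun z => r z ξ))
    (hr_supp : ∀ ξ : Ed d, ∀ z ∉ Metric.ball (0 : Ed d) 1, r z ξ = 0)
    (hr_bd : ∀ ξ : Ed d, 1 < ‖ξ‖ →
      (∫ z in Metric.ball (0 : Ed d) 1, ‖r z ξ‖) ≤ C₁ * ‖ξ‖ ^ (-(m + 1)))
    (k : ℝ) (hk : max (2 * C₁ / ∫ z in Metric.ball (0 : Ed d) 1, σ z) 1 < k) :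
    (∫ z in Metric.ball (0 : Ed d) 1, σ z) ≤
      2 * (n : ℝ) ^ 2 / ‖betaD d‖ ^ 2 *
        k ^ (4 * (n : ℝ) + m - (d : ℝ) - 1) * MPL d n m σ r k := by
  have hd0 : 0 < d := by rcases hd with h | h <;> omega
  have hk1 : (1:ℝ) < k := lt_of_le_of_lt (le_max_right _ _) hk
  have hk0 : (0:ℝ) < k := by linarith
  have hb : 0 < ‖betaD d‖ := by
    simpa [AbsoluteValue.pos_iff] using (my_betaD_ne d)
  have hn0 : (0:ℝ) < (n:ℝ) ^ 2 := by
    have : (1:ℝ) ≤ (n:ℝ) := by exact_mod_cast hn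
    positivity
  set S : ℝ := ∫ z in Metric.ball (0:Ed d) 1, σ z with hSdef
  have hS0 : 0 ≤ S := setIntegral_nonneg measurableSet_ball (fun z _ => hσ_nn z)
  have hS_full : ∫ z, σ z = S := by
    rw [hSdef]; exact (setIntegral_eq_integral_of_forall_compl_eq_zero hσ_supp).symm
  -- unit vector
  set e : Ed d := EuclideanSpace.single ⟨0, hd0⟩ (1:ℝ) with hedef
  have he : ‖e‖ = 1 := by rw [hedef, EuclideanSpace.norm_single]; norm_num
  have he' : ‖-e‖ = 1 := by rw [norm_neg]; exact he
  -- sigmaHat at 0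
  have hsig0 : sigmaHat d σ (0 : Ed d) = (S : ℂ) := by
    unfold sigmaHat
    simp only [inner_zero_left, Complex.ofReal_zero, mul_zero, Complex.exp_zero, mul_one]
    rw [← hS_full]; exact integral_ofReal
  -- positivity facts
  have hP : 0 < k ^ ((d:ℝ) + 1 - 4 * (n:ℝ)) := Real.rpow_pos_of_pos hk0 _
  have hPm : 0 < k ^ (-m) := Real.rpow_pos_of_pos hk0 _
  -- bound on σ̂
  have hsigbd : ∀ γ : Ed d, ‖sigmaHat d σ γ‖ ≤ S := by
    intro γ
    calc ‖sigmaHat d σ γ‖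
        ≤ ∫ z, ‖(σ z : ℂ) * Complex.exp (-Complex.I * ((inner ℝ γ z : ℝ) : ℂ))‖ :=
          norm_integral_le_integral_norm _
      _ = ∫ z, σ z := by
          congr 1; funext z
          rw [norm_mul, my_exp_abs, mul_one,
            Complex.norm_real, Real.norm_eq_abs, abs_of_nonneg (hσ_nn z)]
      _ = S := hS_full
  -- bound on the r integral (with exponential factor)
  have hIbd : ∀ x y : Ed d, ‖y‖ = 1 →
      ‖∫ z in Metric.ball (0:Ed d) 1,
        r z (-(k • y)) * Complex.exp (-Complex.I * ((inner ℝ (k • (x + y)) z : ℝ) : ℂ))‖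
      ≤ C₁ * k ^ (-(m+1)) := by
    intro x y hy
    have hnorm : ‖-(k • y)‖ = k := by
      rw [norm_neg, norm_smul, hy, mul_one, Real.norm_eq_abs, abs_of_pos hk0]
    calc ‖∫ z in Metric.ball (0:Ed d) 1,
          r z (-(k • y)) * Complex.exp (-Complex.I * ((inner ℝ (k • (x + y)) z : ℝ) : ℂ))‖
        ≤ ∫ z in Metric.ball (0:Ed d) 1,
            ‖r z (-(k • y)) * Complex.exp (-Complex.I * ((inner ℝ (k • (x + y)) z : ℝ) : ℂ))‖ :=
          norm_integral_le_integral_norm _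
      _ = ∫ z in Metric.ball (0:Ed d) 1, ‖r z (-(k • y))‖ := by
          congr 1; funext z
          rw [norm_mul, my_exp_abs, mul_one]
      _ ≤ C₁ * ‖-(k • y)‖ ^ (-(m+1)) := hr_bd _ (by rw [hnorm]; exact hk1)
      _ = C₁ * k ^ (-(m+1)) := by rw [hnorm]
  -- global bound on FPL over unit vectors
  set B : ℝ := ‖betaD d‖ ^ 2 / (n:ℝ) ^ 2 * k ^ ((d:ℝ) + 1 - 4 * (n:ℝ)) *
      (k ^ (-m) * S + C₁ * k ^ (-(m+1))) with hBdef
  have hFbd : ∀ x y : Ed d, ‖x‖ = 1 → ‖y‖ = 1 →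
      ‖FPL d n m σ r k x y‖ ≤ B := by
    intro x y hx hy
    unfold FPL
    rw [norm_mul, norm_mul, norm_div, norm_pow, norm_pow, Complex.norm_natCast, Complex.norm_real,
      Real.norm_eq_abs, abs_of_nonneg hP.le, hBdef]
    refine mul_le_mul_of_nonneg_left ?_ (by positivity)
    refine le_trans (norm_add_le _ _) (add_le_add ?_ (hIbd x y hy))
    rw [norm_mul, Complex.norm_real, Real.norm_eq_abs, abs_of_nonneg hPm.le]
    exact mul_le_mul_of_nonneg_left (hsigbd _) hPm.le
  have hbdd : BddAbove {v : ℝ | ∃ x y : Ed d, ‖x‖ = 1 ∧ ‖y‖ = 1 ∧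
      v = ‖FPL d n m σ r k x y‖} := by
    refine ⟨B, ?_⟩
    rintro v ⟨x, y, hx, hy, rfl⟩
    exact hFbd x y hx hy
  have hM : ‖FPL d n m σ r k e (-e)‖ ≤ MPL d n m σ r k := by
    unfold MPL
    exact le_csSup hbdd ⟨e, -e, he, he', rfl⟩
  have hM0 : 0 ≤ MPL d n m σ r k := le_trans (norm_nonneg _) hM
  -- case S = 0
  rcases eq_or_lt_of_le hS0 with hS | hSpos
  · rw [← hS]
    positivity
  -- main case
  have hkS : 2 * C₁ / S < k := lt_of_le_of_lt (le_max_left _ _) hk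
  -- value of FPL at (e, -e)
  have hFval : FPL d n m σ r k e (-e) =
      (betaD d) ^ 2 / (n : ℂ) ^ 2 * ((k ^ ((d : ℝ) + 1 - 4 * (n : ℝ)) : ℝ) : ℂ) *
        (((k ^ (-m) : ℝ) : ℂ) * (S : ℂ) +
          ∫ z in Metric.ball (0 : Ed d) 1,
            r z (-(k • (-e))) * Complex.exp (-Complex.I * ((inner ℝ (k • (e + (-e))) z : ℝ) : ℂ))) := by
    unfold FPL
    rw [show e + (-e) = 0 from by abel, smul_zero, hsig0]
  -- lower bound on |FPL(e,-e)|
  have hhalf : C₁ * k ^ (-(m+1)) ≤ S / 2 * k ^ (-m) := by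
    have h1 : 2 * C₁ < k * S := by
      rw [div_lt_iff₀ hSpos] at hkS; linarith
    have h2 : C₁ / k ≤ S / 2 := by
      rw [div_le_div_iff₀ hk0 (by norm_num : (0:ℝ) < 2)]; nlinarith
    have h3 : k ^ (-(m+1)) = k⁻¹ * k ^ (-m) := by
      rw [show -(m+1) = -1 + -m from by ring, Real.rpow_add hk0, Real.rpow_neg_one]
    rw [h3]
    calc C₁ * (k⁻¹ * k ^ (-m)) = (C₁ / k) * k ^ (-m) := by ring
      _ ≤ S / 2 * k ^ (-m) := mul_le_mul_of_nonneg_right h2 hPm.le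
  have hlow : ‖betaD d‖ ^ 2 / (n:ℝ) ^ 2 * k ^ ((d:ℝ) + 1 - 4 * (n:ℝ)) *
      (k ^ (-m) * S / 2) ≤ MPL d n m σ r k := by
    refine le_trans ?_ hM
    rw [hFval, norm_mul, norm_mul, norm_div, norm_pow, norm_pow, Complex.norm_natCast,
      Complex.norm_real, Real.norm_eq_abs, abs_of_nonneg hP.le]
    refine mul_le_mul_of_nonneg_left ?_ (by positivity)
    -- k^{-m} S / 2 ≤ |k^{-m} S + I|
    have habs : ‖((k ^ (-m) : ℝ) : ℂ) * (S : ℂ)‖ = k ^ (-m) * S := by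
      rw [norm_mul, Complex.norm_real, Complex.norm_real, Real.norm_eq_abs, Real.norm_eq_abs,
        abs_of_nonneg hPm.le,
        abs_of_nonneg hS0]
    set I : ℂ := ∫ z in Metric.ball (0 : Ed d) 1,
        r z (-(k • (-e))) * Complex.exp (-Complex.I * ((inner ℝ (k • (e + (-e))) z : ℝ) : ℂ)) with hIdef
    have hI : ‖I‖ ≤ C₁ * k ^ (-(m+1)) := hIbd e (-e) he'
    have htri : k ^ (-m) * S - ‖I‖ ≤
        ‖((k ^ (-m) : ℝ) : ℂ) * (S : ℂ) + I‖ := by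
      have := norm_sub_norm_le (((k ^ (-m) : ℝ) : ℂ) * (S : ℂ)) (-I)
      simp only [norm_neg, sub_neg_eq_add] at this
      linarith [this, habs]
    have : ‖I‖ ≤ S / 2 * k ^ (-m) := le_trans hI hhalf
    linarith
  -- conclude by algebra
  set Q : ℝ := k ^ (4 * (n:ℝ) + m - (d:ℝ) - 1) with hQdef
  have hQ : 0 < Q := Real.rpow_pos_of_pos hk0 _
  have hexp : k ^ ((d:ℝ) + 1 - 4 * (n:ℝ)) * k ^ (-m) = Q⁻¹ := by
    rw [hQdef, ← Real.rpow_neg hk0.le, ← Real.rpow_add hk0]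
    congr 1; ring
  have key : ‖betaD d‖ ^ 2 / (2 * (n:ℝ) ^ 2) * Q⁻¹ * S ≤ MPL d n m σ r k := by
    calc ‖betaD d‖ ^ 2 / (2 * (n:ℝ) ^ 2) * Q⁻¹ * S
        = ‖betaD d‖ ^ 2 / (n:ℝ) ^ 2 *
          (k ^ ((d:ℝ) + 1 - 4 * (n:ℝ)) * k ^ (-m)) * S / 2 := by rw [hexp]; ring
      _ = ‖betaD d‖ ^ 2 / (n:ℝ) ^ 2 * k ^ ((d:ℝ) + 1 - 4 * (n:ℝ)) *
          (k ^ (-m) * S / 2) := by ring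
      _ ≤ MPL d n m σ r k := hlow
  calc S = 2 * (n:ℝ) ^ 2 / ‖betaD d‖ ^ 2 * Q *
        (‖betaD d‖ ^ 2 / (2 * (n:ℝ) ^ 2) * Q⁻¹ * S) := by
        field_simp
      _ ≤ 2 * (n:ℝ) ^ 2 / ‖betaD d‖ ^ 2 * Q * MPL d n m σ r k :=
        mul_le_mul_of_nonneg_left key (by positivity)
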